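/- Let K be a finite field or an algebraically closed field and let X be a complete simplicial toric variety over K with split torus T_X. A subset Y ⊆ T_X is a finite submonoid of T_X if and only if Y = Y_{Q,H} for some finite submonoid H of K* and integer matrix Q, where Y_{Q,H} = {[t₁^{q₁₁}⋯t_s^{q_{s1}} : ⋯ : t₁^{q_{1r}}⋯t_s^{q_{sr}}] : t₁,…,t_s ∈ H}. -/

import Mathlib

open MvPolynomial

/-- The exponent vector of the positive part `m⁺` of an integer vector. -/
noncomputable def expOf {r : ℕ} (m : Fin r → ℤ) : Fin r →₀ ℕ :=
  Finsupp.equivFunOnFinite.symm fun i => (m i).toNat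

/-- The binomial `F_m = x^{m⁺} - x^{m⁻}`. -/
noncomputable def latticeBinomial (K : Type*) [Field K] {r : ℕ} (m : Fin r → ℤ) :
    MvPolynomial (Fin r) K :=
  monomial (expOf m) 1 - monomial (expOf (-m)) 1

/-- The lattice ideal `I_L` of a lattice `L ⊆ ℤ^r`. -/
noncomputable def latticeIdeal (K : Type*) [Field K] {r : ℕ} (L : AddSubgroup (Fin r → ℤ)) :
    Ideal (MvPolynomial (Fin r) K) :=
  Ideal.span {f | ∃ m ∈ L, f = latticeBinomial K m}

/-- Degree of a monomial exponent under the grading `β`. -/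
def degOf {A : Type*} [AddCommGroup A] {r : ℕ} (β : (Fin r → ℤ) →+ A) (d : Fin r →₀ ℕ) : A :=
  β fun i => (d i : ℤ)

/-- `f` is homogeneous of degree `α` with respect to `β`. -/
def IsHomogOf {A : Type*} [AddCommGroup A] {K : Type*} [Field K] {r : ℕ}
    (β : (Fin r → ℤ) →+ A) (α : A) (f : MvPolynomial (Fin r) K) : Prop :=
  ∀ d ∈ f.support, degOf β d = α

/-- `f` is homogeneous with respect to `β`. -/
def IsHomog {A : Type*} [AddCommGroup A] {K : Type*} [Field K] {r : ℕ}
    (β : (Fin r → ℤ) →+ A) (f : MvPolynomial (Fin r) K) : Prop :=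
  ∃ α, IsHomogOf β α f

/-- An ideal is homogeneous if it is generated by homogeneous polynomials. -/
def IsHomogIdeal {A : Type*} [AddCommGroup A] {K : Type*} [Field K] {r : ℕ}
    (β : (Fin r → ℤ) →+ A) (I : Ideal (MvPolynomial (Fin r) K)) : Prop :=
  ∃ S : Set (MvPolynomial (Fin r) K), (∀ f ∈ S, IsHomog β f) ∧ I = Ideal.span S

/-- `x^m(P) = ∏ᵢ Pᵢ^{mᵢ}` as a unit. -/
def charEval {K : Type*} [Field K] {r : ℕ} (P : Fin r → Kˣ) (m : Fin r → ℤ) : Kˣ :=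
  ∏ i, (P i) ^ (m i)

/-- The group `G = Ker π`, consisting of the points where all characters coming
from `Ker β` take the value `1`. -/
def torusG {K : Type*} [Field K] {A : Type*} [AddCommGroup A] {r : ℕ}
    (β : (Fin r → ℤ) →+ A) : Subgroup (Fin r → Kˣ) where
  carrier := {g | ∀ m ∈ β.ker, charEval g m = 1}
  one_mem' := by intro m hm; simp [charEval]
  mul_mem' := by
    intro a b ha hb m hm
    have : charEval (a * b) m = charEval a m * charEval b m := by
      simp [charEval, mul_zpow, Finset.prod_mul_distrib]
    rw [this, ha m hm, hb m hm, one_mul]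
  inv_mem' := by
    intro a ha m hm
    have : charEval a⁻¹ m = (charEval a m)⁻¹ := by
      simp [charEval, inv_zpow]
    rw [this, ha m hm, inv_one]

/-- The vanishing ideal of a set of torus points, generated by the homogeneous
polynomials vanishing on it. -/
noncomputable def vanishingIdeal {K : Type*} [Field K] {A : Type*} [AddCommGroup A] {r : ℕ}
    (β : (Fin r → ℤ) →+ A) (Y : Set ((Fin r → Kˣ) ⧸ torusG (K := K) β)) :
    Ideal (MvPolynomial (Fin r) K) :=
  Ideal.span {f | IsHomog β f ∧
    ∀ P : Fin r → Kˣ, (QuotientGroup.mk P ∈ Y) → eval (fun i => (P i : K)) f = 0}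

/-- Height of an ideal: infimum of heights of primes containing it. -/
noncomputable def idealHeight {R : Type*} [CommRing R] (I : Ideal R) : ℕ∞ :=
  ⨅ (p : PrimeSpectrum R) (_ : I ≤ p.asIdeal), Order.height p

/-- A homogeneous ideal is a complete intersection if it is generated by a regular
sequence of homogeneous polynomials whose length is the height of the ideal. -/
def IsCompleteIntersection {K : Type*} [Field K] {A : Type*} [AddCommGroup A] {r : ℕ}
    (β : (Fin r → ℤ) →+ A) (I : Ideal (MvPolynomial (Fin r) K)) : Prop :=
  ∃ (k : ℕ) (f : Fin k → MvPolynomial (Fin r) K),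
    (∀ i, IsHomog β (f i)) ∧
    RingTheory.Sequence.IsRegular (MvPolynomial (Fin r) K) (List.ofFn f) ∧
    I = Ideal.span (Set.range f) ∧ (k : ℕ∞) = idealHeight I

section MyHelpers
variable {K : Type*} [Field K] {r : ℕ}

lemma charEval_mul' (P P' : Fin r → Kˣ) (m : Fin r → ℤ) :
    charEval (P * P') m = charEval P m * charEval P' m := by
  simp [charEval, mul_zpow, Finset.prod_mul_distrib]

lemma charEval_inv' (P : Fin r → Kˣ) (m : Fin r → ℤ) :
    charEval P⁻¹ m = (charEval P m)⁻¹ := by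
  simp [charEval, inv_zpow]

lemma charEval_pow' (P : Fin r → Kˣ) (d : ℕ) (m : Fin r → ℤ) :
    charEval (P ^ d) m = charEval P m ^ d := by
  simp only [charEval, ← Finset.prod_pow]
  refine Finset.prod_congr rfl fun i _ => ?_
  rw [Pi.pow_apply, ← zpow_natCast, ← zpow_mul, mul_comm, zpow_mul, zpow_natCast]

/-- `charEval P` as an additive hom into `Additive Kˣ`. -/
def chiHom (P : Fin r → Kˣ) : (Fin r → ℤ) →+ Additive Kˣ where
  toFun m := Additive.ofMul (charEval P m)
  map_zero' := by simp [charEval]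
  map_add' m n := by
    rw [← ofMul_mul]
    congr 1
    simp [charEval, zpow_add, Finset.prod_mul_distrib]

lemma charEval_of_linear (ψ : (Fin r → ℤ) →ₗ[ℤ] Additive Kˣ) (m : Fin r → ℤ) :
    charEval (fun j => Additive.toMul (ψ (Pi.single j 1))) m = Additive.toMul (ψ m) := by
  conv_rhs => rw [show m = ∑ j, (m j) • Pi.single j (1 : ℤ) by
    simp_rw [← Pi.single_smul, smul_eq_mul, mul_one, Finset.univ_sum_single]]
  rw [map_sum, toMul_sum, charEval]
  refine Finset.prod_congr rfl fun j _ => ?_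
  rw [map_smul, toMul_zsmul]

lemma exists_zpow_eq [IsAlgClosed K] (c : Kˣ) {a : ℤ} (ha : a ≠ 0) : ∃ z : Kˣ, z ^ a = c := by
  rcases ha.lt_or_gt with h | h
  · obtain ⟨z0, hz0⟩ := IsAlgClosed.exists_pow_nat_eq ((c⁻¹ : Kˣ) : K)
      (n := a.natAbs) (Int.natAbs_pos.mpr ha)
    have hz0ne : z0 ≠ 0 := by
      rintro rfl
      simp only [zero_pow (Int.natAbs_ne_zero.mpr ha)] at hz0
      exact (Units.ne_zero _) hz0.symm
    refine ⟨Units.mk0 z0 hz0ne, ?_⟩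
    have hna : a = -(a.natAbs : ℤ) := by
      rw [Int.ofNat_natAbs_of_nonpos h.le, neg_neg]
    rw [hna, zpow_neg, zpow_natCast, inv_eq_iff_eq_inv]
    ext
    simpa using hz0
  · obtain ⟨z0, hz0⟩ := IsAlgClosed.exists_pow_nat_eq ((c : Kˣ) : K)
      (n := a.natAbs) (Int.natAbs_pos.mpr ha)
    have hz0ne : z0 ≠ 0 := by
      rintro rfl
      simp only [zero_pow (Int.natAbs_ne_zero.mpr ha)] at hz0
      exact (Units.ne_zero _) hz0.symm
    refine ⟨Units.mk0 z0 hz0ne, ?_⟩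
    have hna : a = (a.natAbs : ℤ) := (Int.natAbs_of_nonneg h.le).symm
    rw [hna, zpow_natCast]
    ext
    simpa using hz0

lemma isOfFinOrder_of_zpow_eq_one {G : Type*} [Group G] {z : G} {e : ℤ} (he : e ≠ 0)
    (h : z ^ e = 1) : IsOfFinOrder z := by
  refine isOfFinOrder_iff_pow_eq_one.mpr ⟨e.natAbs, Int.natAbs_pos.mpr he, ?_⟩
  rcases Int.natAbs_eq e with h' | h'
  · rw [← zpow_natCast, ← h', h]
  · rw [← zpow_natCast, ← neg_neg (e.natAbs : ℤ), ← h', zpow_neg, h, inv_one]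

variable {A : Type*} [AddCommGroup A]

lemma mem_torusG_iff (β : (Fin r → ℤ) →+ A) (g : Fin r → Kˣ) :
    g ∈ torusG (K := K) β ↔ ∀ m ∈ β.ker, charEval g m = 1 := Iff.rfl

/-- Torsion lifting: any torsion point of the quotient torus over an algebraically
closed field has a representative whose components are roots of unity. -/
lemma lift_torsion [IsAlgClosed K] (β : (Fin r → ℤ) →+ A)
    (y : (Fin r → Kˣ) ⧸ torusG (K := K) β) {d : ℕ} (hd : 0 < d) (hy : y ^ d = 1) :
    ∃ P : Fin r → Kˣ, y = QuotientGroup.mk P ∧ ∀ j, IsOfFinOrder (P j) := by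
  obtain ⟨P0, rfl⟩ := QuotientGroup.mk_surjective y
  have hG : ∀ m ∈ β.ker, charEval P0 m ^ d = 1 := by
    intro m hm
    have h1 : ((P0 ^ d : Fin r → Kˣ) : (Fin r → Kˣ) ⧸ torusG (K := K) β) = 1 := by
      rw [QuotientGroup.mk_pow]
      exact hy
    have h2 : P0 ^ d ∈ torusG (K := K) β := (QuotientGroup.eq_one_iff _).mp h1
    rw [← charEval_pow']
    exact h2 m hm
  -- Smith normal form of the kernel lattice
  set L : Submodule ℤ (Fin r → ℤ) := AddSubgroup.toIntSubmodule β.ker with hL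
  obtain ⟨n, snf⟩ := L.smithNormalForm (Pi.basisFun ℤ (Fin r))
  obtain ⟨bM, bN, f, a, hsnf⟩ := snf
  have ha : ∀ i, a i ≠ 0 := by
    intro i hai
    have := hsnf i
    rw [hai, zero_smul] at this
    exact bN.ne_zero i (Subtype.coe_injective this)
  -- the values of χ_{P0} on the Smith basis of L are d-th roots of unity
  set c : Fin n → Kˣ := fun i => charEval P0 (bN i : Fin r → ℤ) with hc
  have hcd : ∀ i, c i ^ d = 1 := fun i => hG _ (bN i).2
  -- choose a i-th roots
  have hζ : ∀ i : Fin n, ∃ z : Kˣ, z ^ (a i) = c i := fun i => exists_zpow_eq (c i) (ha i)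
  choose ζ hζeq using hζ
  have hζfin : ∀ i, IsOfFinOrder (ζ i) := by
    intro i
    refine isOfFinOrder_of_zpow_eq_one (e := a i * d) (mul_ne_zero (ha i) (by exact_mod_cast hd.ne')) ?_
    rw [zpow_mul, hζeq, zpow_natCast, hcd]
  -- define the extension
  classical
  set v : Fin r → Additive Kˣ := fun j =>
    if h : ∃ i, f i = j then Additive.ofMul (ζ h.choose) else 0 with hv
  set χ' : (Fin r → ℤ) →ₗ[ℤ] Additive Kˣ := bM.constr ℤ v with hχ'
  have hvfin : ∀ j, IsOfFinOrder (Additive.toMul (v j)) := by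
    intro j
    rw [hv]
    dsimp only
    split
    · exact hζfin _
    · exact IsOfFinOrder.one
  set P : Fin r → Kˣ := fun j => Additive.toMul (χ' (Pi.single j 1)) with hP
  have hPfin : ∀ j, IsOfFinOrder (P j) := by
    intro j
    have : χ' (Pi.single j 1) = ∑ k, (bM.equivFun (Pi.single j 1) k) • v k :=
      bM.constr_apply_fintype ℤ v _
    rw [hP]
    simp only [this, toMul_sum]
    refine Submonoid.prod_mem (CommGroup.torsion Kˣ).toSubmonoid (fun k _ => ?_)
    rw [toMul_zsmul]
    exact Subgroup.zpow_mem _ ((CommGroup.mem_torsion _).mpr (hvfin k)) _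
  -- χ' agrees with χ_{P0} on L
  have hagree : ∀ m ∈ β.ker, Additive.toMul (χ' m) = charEval P0 m := by
    have hcomp : χ' ∘ₗ L.subtype = (chiHom P0).toIntLinearMap ∘ₗ L.subtype := by
      refine bN.ext fun i => ?_
      have hex : ∃ i', f i' = f i := ⟨i, rfl⟩
      have hch : hex.choose = i := f.injective hex.choose_spec
      have lhs : χ' (bN i : Fin r → ℤ) = Additive.ofMul (c i) := by
        rw [show ((bN i : Fin r → ℤ)) = a i • bM (f i) from hsnf i, map_smul, hχ',
          bM.constr_basis, hv]
        simp only [dif_pos hex, hch]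
        rw [← ofMul_zpow, hζeq]
      have rhs : (chiHom P0).toIntLinearMap (bN i : Fin r → ℤ) = Additive.ofMul (c i) := rfl
      simp only [LinearMap.comp_apply, Submodule.subtype_apply]
      rw [lhs, rhs]
    intro m hm
    have hmL : m ∈ L := hm
    have := congrArg (fun ψ => ψ ⟨m, hmL⟩) hcomp
    simp only [LinearMap.comp_apply, Submodule.subtype_apply] at this
    rw [this]
    rfl
  refine ⟨P, ?_, hPfin⟩
  rw [QuotientGroup.eq]
  intro m hm
  rw [charEval_mul', charEval_inv']
  rw [hP, charEval_of_linear χ' m, hagree m hm, inv_mul_cancel]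

end MyHelpers

/-- over a finite or algebraically closed field, a subset `Y` of the
torus is a finite submonoid if and only if `Y = Y_{Q,H}` is parameterized by Laurent
monomials, for some integer matrix `Q` and finite submonoid `H` of `K*`. -/
theorem stmt_4 {K : Type*} [Field K] {A : Type*} [AddCommGroup A] {r : ℕ}
    (hK : Finite K ∨ IsAlgClosed K)
    (β : (Fin r → ℤ) →+ A) (hβ : Function.Surjective β)
    (Y : Set ((Fin r → Kˣ) ⧸ torusG (K := K) β)) :
    ((∃ M : Submonoid ((Fin r → Kˣ) ⧸ torusG (K := K) β), Y = (M : Set _)) ∧ Y.Finite) ↔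
      (∃ (s : ℕ) (Q : Matrix (Fin s) (Fin r) ℤ) (H : Submonoid Kˣ), (H : Set Kˣ).Finite ∧
        Y = {y | ∃ t : Fin s → Kˣ, (∀ i, t i ∈ H) ∧
          y = QuotientGroup.mk (fun j => ∏ i, (t i) ^ (Q i j))}) := by
  classical
  constructor
  · rintro ⟨⟨M, rfl⟩, hfin⟩
    -- every element has a representative with finite-order components
    have hrep : ∀ y : ↥(M : Set ((Fin r → Kˣ) ⧸ torusG (K := K) β)), ∃ P : Fin r → Kˣ,
        (y.1 : (Fin r → Kˣ) ⧸ torusG (K := K) β) = QuotientGroup.mk P ∧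
        ∀ j, IsOfFinOrder (P j) := by
      rcases hK with hKfin | hKac
      · intro y
        obtain ⟨P, hP⟩ := QuotientGroup.mk_surjective y.1
        refine ⟨P, hP.symm, fun j => ?_⟩
        exact isOfFinOrder_iff_pow_eq_one.mpr
          ⟨orderOf (P j), orderOf_pos (P j), pow_orderOf_eq_one (P j)⟩
      · intro y
        -- y is torsion
        obtain ⟨k, -, l, -, hkl, hpow⟩ :=
          Set.infinite_univ.exists_ne_map_eq_of_mapsTo
            (f := fun k : ℕ => y.1 ^ k)
            (fun k _ => pow_mem y.2 k) hfin
        have hd : ∀ {k l : ℕ}, k < l →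
            y.1 ^ k =
            y.1 ^ l →
            ∃ P : Fin r → Kˣ,
              y.1 = QuotientGroup.mk P ∧
              ∀ j, IsOfFinOrder (P j) := by
          intro k l hlt heq
          have h2 : y.1 ^ (l - k) = 1 := by
            have h1 : y.1 ^ (l - k) * y.1 ^ k = y.1 ^ k := by
              rw [← pow_add, Nat.sub_add_cancel hlt.le, heq]
            have h3 := congrArg (fun z => z * (y.1 ^ k)⁻¹) h1
            simpa using h3
          exact lift_torsion β _ (Nat.sub_pos_of_lt hlt) h2
        rcases hkl.lt_or_gt with h | h
        · exact hd h hpow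
        · exact hd h hpow.symm
    choose P hPmk hPfin using hrep
    haveI := hfin.fintype
    set N : ℕ := ∏ p : ↥(M : Set ((Fin r → Kˣ) ⧸ torusG (K := K) β)) × Fin r, orderOf (P p.1 p.2) with hNdef
    have hN : 0 < N := Finset.prod_pos fun p _ => (hPfin p.1 p.2).orderOf_pos
    haveI : NeZero N := ⟨hN.ne'⟩
    have hPN : ∀ (y : ↥(M : Set ((Fin r → Kˣ) ⧸ torusG (K := K) β))) (j : Fin r), P y j ∈ rootsOfUnity N K := by
      intro y j
      rw [mem_rootsOfUnity]
      exact orderOf_dvd_iff_pow_eq_one.mp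
        (Finset.dvd_prod_of_mem (fun p : ↥(M : Set ((Fin r → Kˣ) ⧸ torusG (K := K) β)) × Fin r => orderOf (P p.1 p.2))
          (Finset.mem_univ (y, j)))
    obtain ⟨g, hg⟩ := IsCyclic.exists_generator (α := (rootsOfUnity N K))
    set ζ : Kˣ := (g : Kˣ) with hζdef
    have hq : ∀ (y : ↥(M : Set ((Fin r → Kˣ) ⧸ torusG (K := K) β))) (j : Fin r), ∃ k : ℤ, ζ ^ k = P y j := by
      intro y j
      obtain ⟨k, hk⟩ := Subgroup.mem_zpowers_iff.mp (hg ⟨P y j, hPN y j⟩)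
      exact ⟨k, by simpa using congrArg (Subtype.val) hk⟩
    choose q hq using hq
    set e := Fintype.equivFin ↥(M : Set ((Fin r → Kˣ) ⧸ torusG (K := K) β)) with hedef
    refine ⟨Fintype.card ↥(M : Set ((Fin r → Kˣ) ⧸ torusG (K := K) β)), fun i j => q (e.symm i) j, Submonoid.powers ζ, ?_, ?_⟩
    · haveI : Finite ↥((rootsOfUnity N K : Subgroup Kˣ) : Set Kˣ) :=
        inferInstanceAs (Finite ↥(rootsOfUnity N K))
      refine Set.Finite.subset (Set.toFinite ((rootsOfUnity N K : Subgroup Kˣ) : Set Kˣ)) ?_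
      rintro x ⟨k, rfl⟩
      exact pow_mem g.2 k
    · ext y
      constructor
      · intro hy
        refine ⟨fun i => if i = e ⟨y, hy⟩ then ζ else 1, fun i => ?_, ?_⟩
        · by_cases h : i = e ⟨y, hy⟩
          · show (if i = e ⟨y, hy⟩ then ζ else 1) ∈ Submonoid.powers ζ
            rw [if_pos h]
            exact Submonoid.mem_powers ζ
          · show (if i = e ⟨y, hy⟩ then ζ else 1) ∈ Submonoid.powers ζ
            rw [if_neg h]
            exact one_mem _
        · have hfun : (fun j => ∏ i, (if i = e ⟨y, hy⟩ then ζ else 1) ^ (q (e.symm i) j))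
              = P ⟨y, hy⟩ := by
            funext j
            rw [Finset.prod_eq_single (e ⟨y, hy⟩)]
            · rw [if_pos rfl, Equiv.symm_apply_apply, hq]
            · intro i _ hne
              rw [if_neg hne, one_zpow]
            · intro h
              exact absurd (Finset.mem_univ _) h
          rw [hfun]
          exact hPmk ⟨y, hy⟩
      · rintro ⟨t, ht, rfl⟩
        choose aexp ha using fun i => ht i
        have key : (fun j => ∏ i, t i ^ (q (e.symm i) j))
            = ∏ i, (P (e.symm i)) ^ (aexp i) := by
          funext j
          rw [Finset.prod_apply]
          refine Finset.prod_congr rfl fun i _ => ?_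
          rw [Pi.pow_apply, ← hq (e.symm i) j, ← ha i]
          simp only [← zpow_natCast, ← zpow_mul]
          rw [mul_comm]
        rw [key]
        have hmkprod : (QuotientGroup.mk (∏ i, (P (e.symm i)) ^ (aexp i)) :
            (Fin r → Kˣ) ⧸ torusG (K := K) β)
            = ∏ i, (QuotientGroup.mk (P (e.symm i)) :
              (Fin r → Kˣ) ⧸ torusG (K := K) β) ^ (aexp i) := by
          simp only [← QuotientGroup.mk'_apply, map_prod, map_pow]
        rw [SetLike.mem_coe, hmkprod]
        refine Finset.prod_induction _ (· ∈ M) (fun _ _ => mul_mem) (one_mem M) fun i _ => pow_mem ?_ _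
        rw [← hPmk (e.symm i)]
        exact (e.symm i).2
  · rintro ⟨s, Q, H, hH, rfl⟩
    constructor
    · refine ⟨⟨⟨{y | ∃ t : Fin s → Kˣ, (∀ i, t i ∈ H) ∧
          y = QuotientGroup.mk (fun j => ∏ i, (t i) ^ (Q i j))}, ?_⟩, ?_⟩, rfl⟩
      · rintro x y ⟨t, ht, rfl⟩ ⟨u, hu, rfl⟩
        refine ⟨t * u, fun i => mul_mem (ht i) (hu i), ?_⟩
        rw [← QuotientGroup.mk_mul]
        congr 1
        funext j
        simp [mul_zpow, Finset.prod_mul_distrib]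
      · refine ⟨fun _ => 1, fun i => one_mem H, ?_⟩
        have hone : (fun j : Fin r => ∏ i : Fin s, (1:Kˣ) ^ (Q i j)) = 1 := by
          funext j; simp
        rw [hone, QuotientGroup.mk_one]
    · have himg : {y | ∃ t : Fin s → Kˣ, (∀ i, t i ∈ H) ∧
          y = QuotientGroup.mk (fun j => ∏ i, (t i) ^ (Q i j))}
          = (fun t : Fin s → Kˣ => (QuotientGroup.mk (fun j => ∏ i, (t i) ^ (Q i j)) :
              (Fin r → Kˣ) ⧸ torusG (K := K) β)) '' (Set.univ.pi fun _ => (H : Set Kˣ)) := by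
        ext y
        constructor
        · rintro ⟨t, ht, rfl⟩
          exact ⟨t, fun i _ => ht i, rfl⟩
        · rintro ⟨t, ht, rfl⟩
          exact ⟨t, fun i => ht i (Set.mem_univ i), rfl⟩
      rw [himg]
      exact (Set.Finite.pi fun _ => hH).image _
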